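/- The Selberg-type integral ∫_{(0,∞)^n} e^{-(x_0+···+x_{n-1})} · (∏_{0≤i<j≤n-1}(x_j−x_i))^2 dx_0···dx_{n-1} equals (∏_{i=1}^{n} i!) · (∏_{i=1}^{n-1} i!). -/

import Mathlib

open MeasureTheory Real Finset Equiv Matrix


lemma integrableOn_pow_exp (a : ℕ) :
    IntegrableOn (fun x : ℝ => x ^ a * Real.exp (-x)) (Set.Ioi 0) := by
  have h := Real.GammaIntegral_convergent (s := (a : ℝ) + 1) (by positivity)
  refine h.congr_fun ?_ measurableSet_Ioi
  intro x hx
  simp only [add_sub_cancel_right, Real.rpow_natCast]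
  ring

lemma integral_pow_exp (a : ℕ) :
    ∫ x in Set.Ioi (0:ℝ), x ^ a * Real.exp (-x) = (a.factorial : ℝ) := by
  have h := Real.Gamma_nat_eq_factorial a
  rw [Real.Gamma_eq_integral (by positivity : (0:ℝ) < (a:ℝ) + 1)] at h
  rw [← h]
  refine setIntegral_congr_fun measurableSet_Ioi (fun x hx => ?_)
  simp only [add_sub_cancel_right, Real.rpow_natCast]
  ring

section
variable {n : ℕ} (a : Fin n → ℕ)
variable {n : ℕ} (a : Fin n → ℕ)

lemma orthant_measurable : MeasurableSet {x : Fin n → ℝ | ∀ i, 0 < x i} := by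
  have : {x : Fin n → ℝ | ∀ i, 0 < x i} = Set.pi Set.univ (fun _ => Set.Ioi 0) := by
    ext x; simp [Set.mem_pi]
  rw [this]
  exact MeasurableSet.univ_pi (fun _ => measurableSet_Ioi)

lemma indicator_eq :
    ({x : Fin n → ℝ | ∀ i, 0 < x i}).indicator
        (fun x => ∏ j, (x j ^ a j * Real.exp (-(x j))))
      = fun x => ∏ j, (Set.Ioi (0:ℝ)).indicator (fun t => t ^ a j * Real.exp (-t)) (x j) := by
  funext x
  by_cases hx : ∀ i, 0 < x i
  · rw [Set.indicator_of_mem (show x ∈ {x : Fin n → ℝ | ∀ i, 0 < x i} from hx)]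
    exact Finset.prod_congr rfl fun j _ => by rw [Set.indicator_of_mem (Set.mem_Ioi.2 (hx j))]
  · rw [Set.indicator_of_notMem (show x ∉ {x : Fin n → ℝ | ∀ i, 0 < x i} from hx)]
    push_neg at hx
    obtain ⟨i, hi⟩ := hx
    refine (Finset.prod_eq_zero (Finset.mem_univ i) ?_).symm
    exact Set.indicator_of_notMem (by simpa using hi) _

lemma integrableOn_orthant_prod :
    IntegrableOn (fun x : Fin n → ℝ => ∏ j, (x j ^ a j * Real.exp (-(x j))))
      {x : Fin n → ℝ | ∀ i, 0 < x i} := by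
  rw [← integrable_indicator_iff (orthant_measurable), indicator_eq]
  exact Integrable.fintype_prod_dep fun j =>
    (integrable_indicator_iff measurableSet_Ioi).2 (integrableOn_pow_exp (a j))

lemma integral_orthant_prod :
    ∫ x : Fin n → ℝ in {x : Fin n → ℝ | ∀ i, 0 < x i},
        ∏ j, (x j ^ a j * Real.exp (-(x j))) = ∏ j, ((a j).factorial : ℝ) := by
  rw [← integral_indicator (orthant_measurable), indicator_eq, volume_pi]
  erw [MeasureTheory.integral_fintype_prod_eq_prod (ι := Fin n)
      (f := fun j t => (Set.Ioi (0:ℝ)).indicator (fun t => t ^ a j * Real.exp (-t)) t)]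
  refine Finset.prod_congr rfl fun j _ => ?_
  rw [integral_indicator measurableSet_Ioi, integral_pow_exp]

end


lemma choose_sq_sum (i j m : ℕ) (hi : i < m) :
    ∑ k ∈ range m, (i.choose k * j.choose k) = (i + j).choose i := by
  have h1 : ∑ k ∈ range m, (i.choose k * j.choose k)
      = ∑ k ∈ range (i+1), (i.choose k * j.choose k) := by
    refine (Finset.sum_subset (by intro k hk; simp at *; omega) ?_).symm
    intro k _ hk
    simp only [mem_range, not_lt] at hk
    rw [Nat.choose_eq_zero_of_lt (by omega), zero_mul]
  rw [h1, Nat.add_choose_eq, Finset.Nat.sum_antidiagonal_eq_sum_range_succ_mk]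
  rw [← Finset.sum_range_reflect]
  refine Finset.sum_congr rfl fun k hk => ?_
  simp only [mem_range] at hk
  simp only [Nat.add_sub_cancel]
  rw [Nat.choose_symm (by omega : k ≤ i)]

lemma entry_eq (i j m : ℕ) (hi : i < m) (hj : j < m) :
    ((i + j).factorial : ℕ) =
      ∑ k ∈ range m, (i.factorial * i.choose k) * (j.factorial * j.choose k) := by
  have h : ∑ k ∈ range m, (i.factorial * i.choose k) * (j.factorial * j.choose k)
      = i.factorial * j.factorial * ∑ k ∈ range m, (i.choose k * j.choose k) := by
    rw [Finset.mul_sum]; refine Finset.sum_congr rfl fun k _ => by ring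
  rw [h, choose_sq_sum i j m hi]
  rw [← Nat.add_choose_mul_factorial_mul_factorial i j,
    show (i+j).choose i = (i+j).choose j from by
      rw [← Nat.choose_symm (Nat.le_add_right i j), Nat.add_sub_cancel_left]]
  ring

lemma hankel_det (n : ℕ) :
    (Matrix.of fun i j : Fin n => (((i:ℕ) + (j:ℕ)).factorial : ℝ)).det
      = (∏ i : Fin n, ((i:ℕ).factorial : ℝ)) ^ 2 := by
  set A : Matrix (Fin n) (Fin n) ℝ :=
    Matrix.of fun i k : Fin n => (((i:ℕ).factorial * (i:ℕ).choose (k:ℕ) : ℕ) : ℝ) with hA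
  have hM : (Matrix.of fun i j : Fin n => (((i:ℕ) + (j:ℕ)).factorial : ℝ)) = A * Aᵀ := by
    ext i j
    simp only [Matrix.mul_apply, Matrix.transpose_apply, hA, Matrix.of_apply]
    rw [show (∑ k : Fin n, ((((i:ℕ).factorial * (i:ℕ).choose (k:ℕ) : ℕ) : ℝ) *
        (((j:ℕ).factorial * (j:ℕ).choose (k:ℕ) : ℕ) : ℝ))) =
        ((∑ k ∈ range n, ((i:ℕ).factorial * (i:ℕ).choose k) * ((j:ℕ).factorial * (j:ℕ).choose k) : ℕ) : ℝ) by
      push_cast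
      rw [Fin.sum_univ_eq_sum_range (fun k => ((i:ℕ).factorial : ℝ) * ((i:ℕ).choose k) *
        (((j:ℕ).factorial : ℝ) * ((j:ℕ).choose k))) n]]
    rw [← entry_eq _ _ n i.isLt j.isLt]
  have hAlt : A.BlockTriangular OrderDual.toDual := by
    intro i j hij
    simp only [hA, Matrix.of_apply]
    rw [Nat.choose_eq_zero_of_lt (by exact_mod_cast hij)]
    simp
  have hdetA : A.det = ∏ i : Fin n, ((i:ℕ).factorial : ℝ) := by
    rw [Matrix.det_of_lowerTriangular A hAlt]
    refine Finset.prod_congr rfl fun i _ => ?_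
    simp [hA]
  rw [hM, Matrix.det_mul, Matrix.det_transpose, hdetA]
  ring


lemma perm_sum (n : ℕ) :
    ∑ σ : Perm (Fin n), ∑ τ : Perm (Fin n),
      ((Perm.sign σ : ℤ) : ℝ) * ((Perm.sign τ : ℤ) : ℝ) *
        ∏ j, (((σ j : ℕ) + ((τ j : Fin n) : ℕ)).factorial : ℝ)
      = (n.factorial : ℝ) * (∏ i : Fin n, ((i:ℕ).factorial : ℝ)) ^ 2 := by
  have hsq : ∀ σ : Perm (Fin n), ((Perm.sign σ : ℤ) : ℝ) * ((Perm.sign σ : ℤ) : ℝ) = 1 := by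
    intro σ
    rcases Int.units_eq_one_or (Perm.sign σ) with h | h <;> rw [h] <;> norm_num
  have hin : ∀ σ : Perm (Fin n),
      (∑ τ : Perm (Fin n), ((Perm.sign σ : ℤ) : ℝ) * ((Perm.sign τ : ℤ) : ℝ) *
        ∏ j, (((σ j : ℕ) + ((τ j : Fin n) : ℕ)).factorial : ℝ))
      = ∑ ρ : Perm (Fin n), ((Perm.sign ρ : ℤ) : ℝ) *
          ∏ j : Fin n, (((j : ℕ) + ((ρ j : Fin n) : ℕ)).factorial : ℝ) := by
    intro σ
    refine (Fintype.sum_equiv (Equiv.mulRight σ)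
      (fun ρ => ((Perm.sign ρ : ℤ) : ℝ) *
        ∏ j : Fin n, (((j : ℕ) + ((ρ j : Fin n) : ℕ)).factorial : ℝ))
      _ ?_).symm
    intro ρ
    simp only [Equiv.coe_mulRight, Equiv.Perm.sign_mul, Equiv.Perm.mul_apply]
    push_cast
    have h1 : ∏ j : Fin n, (((σ j : ℕ) + ((ρ (σ j) : Fin n) : ℕ)).factorial : ℝ)
        = ∏ j : Fin n, (((j : ℕ) + ((ρ j : Fin n) : ℕ)).factorial : ℝ) :=
      Equiv.prod_comp σ (fun j => (((j : ℕ) + ((ρ j : Fin n) : ℕ)).factorial : ℝ))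
    rw [h1]
    rw [show ((Perm.sign σ : ℤ) : ℝ) * (((Perm.sign ρ : ℤ) : ℝ) * ((Perm.sign σ : ℤ) : ℝ)) *
        (∏ j : Fin n, (((j : ℕ) + ((ρ j : Fin n) : ℕ)).factorial : ℝ))
        = (((Perm.sign σ : ℤ) : ℝ) * ((Perm.sign σ : ℤ) : ℝ)) * (((Perm.sign ρ : ℤ) : ℝ) *
          ∏ j : Fin n, (((j : ℕ) + ((ρ j : Fin n) : ℕ)).factorial : ℝ)) from by ring,
      hsq, one_mul]
  simp only [hin]
  rw [Finset.sum_const, Finset.card_univ, Fintype.card_perm, Fintype.card_fin, nsmul_eq_mul]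
  congr 1
  rw [← hankel_det n, Matrix.det_apply']
  refine Finset.sum_congr rfl fun ρ _ => ?_
  rw [show ∏ i : Fin n, (Matrix.of fun i j : Fin n => (((i:ℕ) + (j:ℕ)).factorial : ℝ)) (ρ i) i
      = ∏ i : Fin n, (((i:ℕ) + ((ρ i : Fin n) : ℕ)).factorial : ℝ) from
    Finset.prod_congr rfl fun i _ => by simp [Matrix.of_apply, Nat.add_comm]]


lemma pair_prod_eq (n : ℕ) (x : Fin n → ℝ) :
    (∏ p ∈ Finset.univ.filter (fun p : Fin n × Fin n => p.1 < p.2), (x p.2 - x p.1))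
      = (Matrix.vandermonde x).det := by
  rw [Matrix.det_vandermonde, Finset.prod_filter, ← Finset.univ_product_univ,
    Finset.prod_product]
  refine Finset.prod_congr rfl fun i _ => ?_
  rw [← Finset.prod_filter]
  refine Finset.prod_congr ?_ fun _ _ => rfl
  ext j; simp

lemma pointwise_expand (n : ℕ) (x : Fin n → ℝ) :
    Real.exp (-(∑ i, x i)) *
        (∏ p ∈ Finset.univ.filter (fun p : Fin n × Fin n => p.1 < p.2), (x p.2 - x p.1)) ^ 2
      = ∑ σ : Perm (Fin n), ∑ τ : Perm (Fin n),
          (((Perm.sign σ : ℤ) : ℝ) * ((Perm.sign τ : ℤ) : ℝ)) *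
            ∏ j, (x j ^ (((σ⁻¹ j : Fin n) : ℕ) + ((τ⁻¹ j : Fin n) : ℕ)) *
              Real.exp (-(x j))) := by
  rw [pair_prod_eq, sq, Matrix.det_apply', Fintype.sum_mul_sum]
  simp only [Finset.mul_sum]
  refine Finset.sum_congr rfl fun σ _ => ?_
  refine Finset.sum_congr rfl fun τ _ => ?_
  simp only [Matrix.vandermonde_apply]
  have hexp : Real.exp (-(∑ i, x i)) = ∏ i, Real.exp (-(x i)) := by
    rw [← Real.exp_sum, Finset.sum_neg_distrib]
  have hperm : ∀ ρ : Perm (Fin n),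
      (∏ i : Fin n, x (ρ i) ^ (i : ℕ)) = ∏ j : Fin n, x j ^ ((ρ⁻¹ j : Fin n) : ℕ) := by
    intro ρ
    rw [← Equiv.prod_comp ρ (fun j => x j ^ ((ρ⁻¹ j : Fin n) : ℕ))]
    exact Finset.prod_congr rfl fun i _ => by rw [Equiv.Perm.coe_inv, Equiv.symm_apply_apply]
  rw [hexp, hperm σ, hperm τ]
  rw [show ∏ j, (x j ^ (((σ⁻¹ j : Fin n) : ℕ) + ((τ⁻¹ j : Fin n) : ℕ)) * Real.exp (-(x j)))
      = (∏ j, x j ^ ((σ⁻¹ j : Fin n) : ℕ)) * (∏ j, x j ^ ((τ⁻¹ j : Fin n) : ℕ)) *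
        ∏ i, Real.exp (-(x i)) from by
    rw [← Finset.prod_mul_distrib, ← Finset.prod_mul_distrib]
    exact Finset.prod_congr rfl fun j _ => by rw [pow_add]]
  ring


lemma icc_fact (m : ℕ) :
    ∏ i ∈ Finset.Icc 1 (m - 1), (i.factorial : ℝ)
      = ∏ i ∈ Finset.range m, (i.factorial : ℝ) := by
  cases m with
  | zero => simp
  | succ k =>
    have h : Finset.range (k + 1) = insert 0 (Finset.Icc 1 k) := by
      ext x; simp only [Finset.mem_range, Finset.mem_insert, Finset.mem_Icc]; omega
    rw [Nat.succ_sub_one, h, Finset.prod_insert (by simp)]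
    simp

theorem selberg_type_integral (n : ℕ) :
    ∫ x : Fin n → ℝ in {x : Fin n → ℝ | ∀ i, 0 < x i},
        Real.exp (-(∑ i, x i)) *
          (∏ p ∈ Finset.univ.filter (fun p : Fin n × Fin n => p.1 < p.2),
            (x p.2 - x p.1)) ^ 2 =
      (∏ i ∈ Finset.Icc 1 n, (i.factorial : ℝ)) *
        (∏ i ∈ Finset.Icc 1 (n - 1), (i.factorial : ℝ)) := by
  have step1 : ∫ x : Fin n → ℝ in {x : Fin n → ℝ | ∀ i, 0 < x i},
        Real.exp (-(∑ i, x i)) *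
          (∏ p ∈ Finset.univ.filter (fun p : Fin n × Fin n => p.1 < p.2),
            (x p.2 - x p.1)) ^ 2
      = ∑ σ : Perm (Fin n), ∑ τ : Perm (Fin n),
          (((Perm.sign σ : ℤ) : ℝ) * ((Perm.sign τ : ℤ) : ℝ)) *
            ∏ j : Fin n, ((((σ⁻¹ j : Fin n) : ℕ) + ((τ⁻¹ j : Fin n) : ℕ)).factorial : ℝ) := by
    simp only [pointwise_expand]
    rw [MeasureTheory.integral_finset_sum _ (fun σ _ => integrable_finset_sum _
      (fun τ _ => ((integrableOn_orthant_prod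
        (fun j => ((σ⁻¹ j : Fin n) : ℕ) + ((τ⁻¹ j : Fin n) : ℕ))).const_mul _)))]
    refine Finset.sum_congr rfl fun σ _ => ?_
    rw [MeasureTheory.integral_finset_sum _ (fun τ _ => ((integrableOn_orthant_prod
        (fun j => ((σ⁻¹ j : Fin n) : ℕ) + ((τ⁻¹ j : Fin n) : ℕ))).const_mul _))]
    refine Finset.sum_congr rfl fun τ _ => ?_
    rw [MeasureTheory.integral_const_mul,
      integral_orthant_prod (fun j => ((σ⁻¹ j : Fin n) : ℕ) + ((τ⁻¹ j : Fin n) : ℕ))]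
  rw [step1]
  have step2 : ∑ σ : Perm (Fin n), ∑ τ : Perm (Fin n),
          (((Perm.sign σ : ℤ) : ℝ) * ((Perm.sign τ : ℤ) : ℝ)) *
            ∏ j : Fin n, ((((σ⁻¹ j : Fin n) : ℕ) + ((τ⁻¹ j : Fin n) : ℕ)).factorial : ℝ)
      = ∑ σ : Perm (Fin n), ∑ τ : Perm (Fin n),
          ((Perm.sign σ : ℤ) : ℝ) * ((Perm.sign τ : ℤ) : ℝ) *
            ∏ j : Fin n, (((σ j : ℕ) + ((τ j : Fin n) : ℕ)).factorial : ℝ) := by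
    refine Fintype.sum_equiv (Equiv.inv (Perm (Fin n))) _ _ fun σ => ?_
    refine Fintype.sum_equiv (Equiv.inv (Perm (Fin n))) _ _ fun τ => ?_
    simp only [Equiv.inv_apply, Equiv.Perm.sign_inv, inv_inv]
  rw [step2, perm_sum n]
  rw [Fin.prod_univ_eq_prod_range (fun i => ((i.factorial : ℝ))) n]
  rw [icc_fact n, show Finset.Icc 1 n = Finset.Icc 1 ((n+1) - 1) from by simp,
    icc_fact (n+1), Finset.prod_range_succ]
  ring
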